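/- Let r ≥ 1, let X ⊆ ℝⁿ, and let x ∈ X. Suppose there exist an open set U ∋ x in ℝⁿ, an open set V ⊆ ℝⁿ, and a bijection φ : U → V with both φ and φ⁻¹ of class C^r, such that φ(x) = 0 and φ(X ∩ U) = V ∩ (ℝ^d × {0}^{n-d}). Then there exist a permutation σ of the coordinates of ℝⁿ, an open box B ⊆ ℝⁿ containing x, an open set W ⊆ ℝ^d, and a C^r map g : W → ℝ^{n-d}, such that the image of X ∩ B under the coordinate permutation σ equals the graph {(w, g(w)) : w ∈ W}. -/

import Mathlib

open Function Set



open Function Set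

lemma exists_coord_proj {d n : ℕ} (A : (Fin d → ℝ) →ₗ[ℝ] (Fin n → ℝ))
    (hA : Function.Injective A) :
    ∃ emb : Fin d ↪ Fin n,
      Function.Bijective (LinearMap.pi (fun k => (LinearMap.proj (emb k)).comp A) :
        (Fin d → ℝ) →ₗ[ℝ] (Fin d → ℝ)) := by
  classical
  set f : Fin n → Module.Dual ℝ (Fin d → ℝ) :=
    fun i => (LinearMap.proj i : (Fin n → ℝ) →ₗ[ℝ] ℝ).comp A with hf
  -- coordinate functionals span the dual of ℝ^n
  have hεspan : Submodule.span ℝ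
      (Set.range fun i : Fin n => (LinearMap.proj i : (Fin n → ℝ) →ₗ[ℝ] ℝ)) = ⊤ := by
    rw [eq_top_iff]
    intro Φ _
    have : Φ = ∑ i : Fin n, Φ (Pi.single i 1) • (LinearMap.proj i : (Fin n → ℝ) →ₗ[ℝ] ℝ) := by
      apply LinearMap.ext
      intro v
      rw [pi_eq_sum_univ v]
      simp [LinearMap.sum_apply, mul_comm]
      refine Finset.sum_congr rfl fun i _ => ?_
      have h1 : (fun j => if i = j then (1:ℝ) else 0) = Pi.single i 1 := by
        ext j; simp [Pi.single_apply, eq_comm]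
      rw [h1]
    rw [this]
    exact Submodule.sum_mem _ fun i _ =>
      Submodule.smul_mem _ _ (Submodule.subset_span ⟨i, rfl⟩)
  have hdual : Function.Surjective A.dualMap := LinearMap.dualMap_surjective_of_injective hA
  have hfspan : Submodule.span ℝ (Set.range f) = ⊤ := by
    have himg : Set.range f = A.dualMap '' (Set.range fun i : Fin n =>
        (LinearMap.proj i : (Fin n → ℝ) →ₗ[ℝ] ℝ)) := by
      rw [← Set.range_comp]; rfl
    rw [himg, ← Submodule.map_span, hεspan, Submodule.map_top, LinearMap.range_eq_top.mpr hdual]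
  obtain ⟨t, hts, hspan, hli⟩ := exists_linearIndependent ℝ (Set.range f)
  rw [hfspan] at hspan
  have htfin : t.Finite := hli.setFinite
  have htfintype : Fintype t := htfin.fintype
  -- card t = d
  have hcard : Fintype.card t = d := by
    have hb : Module.finrank ℝ (Module.Dual ℝ (Fin d → ℝ)) = Fintype.card t :=
      Module.finrank_eq_card_basis (Module.Basis.mk hli (by rw [Subtype.range_coe, hspan]))
    rw [Subspace.dual_finrank_eq] at hb
    simp [Module.finrank_pi] at hb
    rw [← Nat.card_coe_set_eq, Nat.card_eq_fintype_card] at hb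
    omega
  have hchoice : ∀ u : t, ∃ i : Fin n, f i = (u : Module.Dual ℝ (Fin d → ℝ)) := fun u => hts u.2
  choose idx hidx using hchoice
  have hidxinj : Function.Injective idx := fun u v huv => by
    apply Subtype.ext; rw [← hidx u, ← hidx v, huv]
  let e : Fin d ≃ t := (Fintype.equivFinOfCardEq hcard).symm
  refine ⟨⟨fun k => idx (e k), fun a b hab => e.injective (hidxinj hab)⟩, ?_⟩
  set Q : (Fin d → ℝ) →ₗ[ℝ] (Fin d → ℝ) :=
    LinearMap.pi (fun k => (LinearMap.proj (idx (e k)) : (Fin n → ℝ) →ₗ[ℝ] ℝ).comp A) with hQ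
  have hinj : Function.Injective Q := by
    rw [← LinearMap.ker_eq_bot, Submodule.eq_bot_iff]
    intro v hv
    have hcoord : ∀ k : Fin d, f (idx (e k)) v = 0 := by
      intro k
      have := congrFun (show Q v = 0 from hv) k
      simpa [hQ, hf] using this
    have hvt : ∀ u ∈ t, u v = 0 := by
      intro u hu
      have h2 : f (idx (e (e.symm ⟨u, hu⟩))) v = 0 := hcoord (e.symm ⟨u, hu⟩)
      rwa [e.apply_symm_apply, hidx] at h2
    have hle : Submodule.span ℝ t ≤ LinearMap.ker (LinearMap.applyₗ v) :=
      Submodule.span_le.mpr (fun u hu => hvt u hu)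
    rw [hspan, top_le_iff] at hle
    refine (Module.forall_dual_apply_eq_zero_iff ℝ v).mp fun φ => ?_
    have : φ ∈ LinearMap.ker (LinearMap.applyₗ v) := hle ▸ Submodule.mem_top
    exact this
  exact ⟨hinj, LinearMap.injective_iff_surjective.mp hinj⟩

lemma exists_perm_extend {d n : ℕ} (hd : d ≤ n) (emb : Fin d ↪ Fin n) :
    ∃ σ : Equiv.Perm (Fin n), ∀ k : Fin d, σ (Fin.castLE hd k) = emb k := by
  classical
  let p : Fin n → Prop := fun i => (i : ℕ) < d
  let q : Fin n → Prop := fun i => i ∈ Set.range emb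
  let eA : {i : Fin n // p i} ≃ Fin d :=
    { toFun := fun s => ⟨s.1, s.2⟩
      invFun := fun k => ⟨Fin.castLE hd k, k.2⟩
      left_inv := fun s => by ext; rfl
      right_inv := fun k => by ext; rfl }
  let eB : Fin d ≃ {i : Fin n // q i} := Equiv.ofInjective emb emb.injective
  have hcards : Fintype.card {i : Fin n // ¬ p i} = Fintype.card {i : Fin n // ¬ q i} := by
    have h1 : Fintype.card {i : Fin n // p i} = d := (Fintype.card_congr eA).trans (Fintype.card_fin d)
    have h2 : Fintype.card {i : Fin n // q i} = d := (Fintype.card_congr eB.symm).trans (Fintype.card_fin d)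
    have h3 := Fintype.card_subtype_compl p
    have h4 := Fintype.card_subtype_compl q
    simp only [Fintype.card_fin] at h3 h4
    rw [h3, h4, h1, h2]
  let e2 : {i : Fin n // ¬ p i} ≃ {i : Fin n // ¬ q i} := Fintype.equivOfCardEq hcards
  refine ⟨(Equiv.sumCompl p).symm.trans ((Equiv.sumCongr (eA.trans eB) e2).trans
    (Equiv.sumCompl q)), fun k => ?_⟩
  have hp : p (Fin.castLE hd k) := k.2
  have h5 : (Equiv.sumCompl p).symm (Fin.castLE hd k) = Sum.inl ⟨Fin.castLE hd k, hp⟩ :=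
    Equiv.sumCompl_symm_apply_of_pos hp
  simp only [Equiv.trans_apply, h5, Equiv.sumCongr_apply, Sum.map_inl, Equiv.sumCompl_apply_inl]
  have h6 : eA ⟨Fin.castLE hd k, hp⟩ = k := by ext; rfl
  rw [h6]
  rfl





theorem stmt_12 (r n d : ℕ) (hr : 1 ≤ r) (hd : d ≤ n)
    (X : Set (Fin n → ℝ)) (x : Fin n → ℝ) (hx : x ∈ X)
    (hchart : ∃ (U V : Set (Fin n → ℝ)) (φ ψ : (Fin n → ℝ) → (Fin n → ℝ)),
      IsOpen U ∧ x ∈ U ∧ IsOpen V ∧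
      ContDiffOn ℝ r φ U ∧ ContDiffOn ℝ r ψ V ∧
      Set.BijOn φ U V ∧ (∀ y ∈ U, ψ (φ y) = y) ∧
      φ x = 0 ∧
      φ '' (X ∩ U) = V ∩ {y | ∀ i : Fin n, d ≤ (i : ℕ) → y i = 0}) :
    ∃ (σ : Equiv.Perm (Fin n)) (B : Set (Fin n → ℝ)),
      (∃ lo hi : Fin n → ℝ, (∀ i, lo i < hi i) ∧
        B = Set.pi Set.univ fun i => Set.Ioo (lo i) (hi i)) ∧
      x ∈ B ∧
      ∃ (W : Set (Fin d → ℝ)) (g : (Fin d → ℝ) → (Fin (n - d) → ℝ)),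
        IsOpen W ∧ ContDiffOn ℝ r g W ∧
        (fun z : Fin n → ℝ => z ∘ σ) '' (X ∩ B) =
          (fun w : Fin d → ℝ =>
            (Fin.append w (g w)) ∘ Fin.cast (by omega : n = d + (n - d))) '' W := by
  classical
  obtain ⟨U, V, φ, ψ, hU, hxU, hV, hφ, hψ, hbij, hinv, hφx, himg⟩ := hchart
  have hr1 : (1 : WithTop ℕ∞) ≤ (r : WithTop ℕ∞) := by exact_mod_cast hr
  have hinv2 : ∀ v ∈ V, φ (ψ v) = v := by
    intro v hv
    obtain ⟨u, hu, rfl⟩ := hbij.surjOn hv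
    rw [hinv u hu]
  have h0V : (0 : Fin n → ℝ) ∈ V := hφx ▸ hbij.mapsTo hxU
  have hψ0 : ψ 0 = x := by rw [← hφx, hinv x hxU]
  -- coordinate inclusion and projections
  set j : (Fin d → ℝ) →L[ℝ] (Fin n → ℝ) := ContinuousLinearMap.pi
    (fun i : Fin n => if hi : (i : ℕ) < d then
      ContinuousLinearMap.proj (⟨(i : ℕ), hi⟩ : Fin d) else 0) with hjdef
  have hj : ∀ (w : Fin d → ℝ) (i : Fin n), j w i =
      if hi : (i : ℕ) < d then w ⟨(i : ℕ), hi⟩ else 0 := by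
    intro w i
    by_cases hi : (i : ℕ) < d <;> simp [hjdef, ContinuousLinearMap.pi_apply, hi]
  have hj0 : j 0 = 0 := map_zero j
  have hjinj : Function.Injective j := by
    intro a b hab
    funext k
    have := congrFun hab (Fin.castLE hd k)
    rw [hj, hj] at this
    simpa [k.2, Fin.ext_iff] using this
  -- derivatives
  have hψat : ContDiffAt ℝ r ψ 0 := hψ.contDiffAt (hV.mem_nhds h0V)
  have hφat : ContDiffAt ℝ r φ x := hφ.contDiffAt (hU.mem_nhds hxU)
  have hψdiff : DifferentiableAt ℝ ψ 0 := hψat.differentiableAt (by exact_mod_cast (show r ≠ 0 by omega))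
  have hφdiff : DifferentiableAt ℝ φ x := hφat.differentiableAt (by exact_mod_cast (show r ≠ 0 by omega))
  set ψ' := fderiv ℝ ψ 0 with hψ'def
  set φ' := fderiv ℝ φ x with hφ'def
  have hE1 : (φ ∘ ψ) =ᶠ[nhds (0 : Fin n → ℝ)] id :=
    Filter.eventually_of_mem (hV.mem_nhds h0V) (fun v hv => hinv2 v hv)
  have hc1 : fderiv ℝ (φ ∘ ψ) 0 = φ'.comp ψ' := by
    rw [fderiv_comp 0 (by rw [hψ0]; exact hφdiff) hψdiff, hψ0]
  have hid1 : φ'.comp ψ' = ContinuousLinearMap.id ℝ (Fin n → ℝ) := by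
    rw [← hc1, hE1.fderiv_eq, fderiv_id]
  have hψ'inj : Function.Injective ψ' := by
    intro a b hab
    have h1 : φ' (ψ' a) = φ' (ψ' b) := congrArg φ' hab
    have h2 : ∀ v, φ' (ψ' v) = v := fun v => by
      rw [← ContinuousLinearMap.comp_apply, hid1]; rfl
    rwa [h2, h2] at h1
  set A := ψ'.comp j with hAdef
  have hAinj : Function.Injective A := by
    intro a b hab
    exact hjinj (hψ'inj hab)
  obtain ⟨emb, hbijQ⟩ := exists_coord_proj (A : (Fin d → ℝ) →ₗ[ℝ] (Fin n → ℝ)) hAinj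
  obtain ⟨σ, hσ⟩ := exists_perm_extend hd emb
  set πS : (Fin n → ℝ) →L[ℝ] (Fin d → ℝ) := ContinuousLinearMap.pi
    (fun k : Fin d => ContinuousLinearMap.proj (emb k)) with hπSdef
  set eqv : (Fin d → ℝ) ≃L[ℝ] (Fin d → ℝ) :=
    (LinearEquiv.ofBijective _ hbijQ).toContinuousLinearEquiv with heqvdef
  set F : (Fin d → ℝ) → (Fin d → ℝ) := fun w => πS (ψ (j w)) with hFdef
  have heqvcoe : (eqv : (Fin d → ℝ) →L[ℝ] (Fin d → ℝ)) = πS.comp (ψ'.comp j) := by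
    ext v
    rfl
  have hF' : HasFDerivAt F (eqv : (Fin d → ℝ) →L[ℝ] (Fin d → ℝ)) 0 := by
    rw [heqvcoe]
    have h1 : HasFDerivAt ψ ψ' (j 0) := by rw [hj0]; exact hψdiff.hasFDerivAt
    exact (πS.hasFDerivAt).comp 0 (h1.comp 0 j.hasFDerivAt)
  have hFc : ContDiffAt ℝ r F 0 := by
    have c1 : ContDiffAt ℝ r ψ (j 0) := by rw [hj0]; exact hψat
    exact (πS.contDiff.contDiffAt).comp 0 (c1.comp 0 j.contDiff.contDiffAt)
  set Φ := hFc.toOpenPartialHomeomorph F hF' (by exact_mod_cast (show r ≠ 0 by omega)) with hΦdef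
  have hΦcoe : ⇑Φ = F := ContDiffAt.toOpenPartialHomeomorph_coe hFc hF' (by exact_mod_cast (show r ≠ 0 by omega))
  have h0src : (0 : Fin d → ℝ) ∈ Φ.source :=
    ContDiffAt.mem_toOpenPartialHomeomorph_source hFc hF' (by exact_mod_cast (show r ≠ 0 by omega))
  have hp0tgt : F 0 ∈ Φ.target :=
    ContDiffAt.image_mem_toOpenPartialHomeomorph_target hFc hF' (by exact_mod_cast (show r ≠ 0 by omega))
  have hsymm0 : Φ.symm (F 0) = 0 := by
    have := Φ.left_inv h0src
    rwa [hΦcoe] at this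
  have hsymmCD : ContDiffAt ℝ r Φ.symm (F 0) := by
    apply Φ.contDiffAt_symm hp0tgt
    · rw [hsymm0]; exact hF'
    · rw [hsymm0, hΦcoe]; exact hFc
  obtain ⟨u0, hu0, hCDu⟩ := hsymmCD.contDiffOn le_rfl (by simp)
  obtain ⟨O, hOu, hOopen, hp0O⟩ := mem_nhds_iff.mp hu0
  have hCDO : ContDiffOn ℝ r Φ.symm O := hCDu.mono hOu
  -- the good neighborhood of 0 in ℝ^d
  set N0 : Set (Fin d → ℝ) := (Φ.source ∩ ⇑Φ ⁻¹' O) ∩ (⇑j ⁻¹' V) with hN0def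
  have hN0open : IsOpen N0 :=
    (Φ.isOpen_inter_preimage hOopen).inter (hV.preimage j.continuous)
  have h0N0 : (0 : Fin d → ℝ) ∈ N0 := by
    refine ⟨⟨h0src, ?_⟩, by rw [Set.mem_preimage, hj0]; exact h0V⟩
    rw [Set.mem_preimage, hΦcoe]
    exact hp0O
  -- projection onto first d coordinates
  set pr : (Fin n → ℝ) →L[ℝ] (Fin d → ℝ) := ContinuousLinearMap.pi
    (fun k : Fin d => ContinuousLinearMap.proj (Fin.castLE hd k)) with hprdef
  have hpr : ∀ (y : Fin n → ℝ) (k : Fin d), pr y k = y (Fin.castLE hd k) := fun y k => rfl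
  -- the open set around x
  set G : Set (Fin n → ℝ) := U ∩ (fun y => pr (φ y)) ⁻¹' N0 with hGdef
  have hGopen : IsOpen G :=
    ContinuousOn.isOpen_inter_preimage
      (pr.continuous.comp_continuousOn hφ.continuousOn) hU hN0open
  have hxG : x ∈ G := by
    refine ⟨hxU, ?_⟩
    rw [Set.mem_preimage, hφx]
    have : pr 0 = 0 := map_zero pr
    rw [this]
    exact h0N0
  -- choose a box inside G
  obtain ⟨ε, hε, hball⟩ := Metric.isOpen_iff.mp hGopen x hxG
  set B : Set (Fin n → ℝ) := Set.pi Set.univ fun i => Set.Ioo (x i - ε) (x i + ε) with hBdef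
  have hBball : B = Metric.ball x ε := by
    rw [ball_pi _ hε]
    ext y
    simp [hBdef, Set.mem_pi, Real.ball_eq_Ioo]
  have hBG : B ⊆ G := hBball ▸ hball
  have hxB : x ∈ B := by
    rw [hBball]
    exact Metric.mem_ball_self hε
  -- the parametrizing set
  set N1 : Set (Fin d → ℝ) :=
    (Φ.source ∩ ⇑Φ ⁻¹' O) ∩ ((⇑j ⁻¹' V) ∩ (fun w => ψ (j w)) ⁻¹' B) with hN1def
  have hN1N0 : N1 ⊆ N0 := fun w hw => ⟨hw.1, hw.2.1⟩
  have hN1src : N1 ⊆ Φ.source := fun w hw => hw.1.1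
  have hN1open : IsOpen N1 := by
    apply (Φ.isOpen_inter_preimage hOopen).inter
    apply ContinuousOn.isOpen_inter_preimage ?_ (hV.preimage j.continuous) ?_
    · exact hψ.continuousOn.comp j.continuous.continuousOn (fun w hw => hw)
    · rw [hBball]; exact Metric.isOpen_ball
  set Wset : Set (Fin d → ℝ) := ⇑Φ '' N1 with hWdef
  have hWopen : IsOpen Wset := Φ.isOpen_image_of_subset_source hN1open hN1src
  have hWO : Wset ⊆ O := by
    rintro p ⟨w, hw, rfl⟩
    exact hw.1.2
  have hWsymm : ∀ w ∈ N1, Φ.symm (Φ w) = w := fun w hw => Φ.left_inv (hN1src hw)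
  -- the graph map
  have hnd : n = d + (n - d) := by omega
  set g : (Fin d → ℝ) → (Fin (n - d) → ℝ) :=
    fun p m => ψ (j (Φ.symm p)) (σ (Fin.cast hnd.symm (Fin.natAdd d m))) with hgdef
  -- smoothness of g
  have hgCD : ContDiffOn ℝ r g Wset := by
    set outer : (Fin n → ℝ) →L[ℝ] (Fin (n - d) → ℝ) := ContinuousLinearMap.pi
      (fun m : Fin (n - d) => ContinuousLinearMap.proj (σ (Fin.cast hnd.symm (Fin.natAdd d m))))
    have c2 : ContDiffOn ℝ r (fun y => ψ (j y)) (⇑j ⁻¹' V) :=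
      hψ.comp j.contDiff.contDiffOn (fun w hw => hw)
    have c1 : ContDiffOn ℝ r Φ.symm Wset := hCDO.mono hWO
    have cmaps : Set.MapsTo Φ.symm Wset (⇑j ⁻¹' V) := by
      rintro p ⟨w, hw, rfl⟩
      rw [hWsymm w hw]
      exact hw.2.1
    exact outer.contDiff.comp_contDiffOn ((c2.comp c1 cmaps))
  -- membership facts for points of X ∩ B
  have hClaim1 : X ∩ B = (fun w => ψ (j w)) '' N1 := by
    apply Set.Subset.antisymm
    · rintro y ⟨hyX, hyB⟩
      have hyG := hBG hyB
      have hyU : y ∈ U := hyG.1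
      have hprN0 : pr (φ y) ∈ N0 := hyG.2
      have hφy : φ y ∈ V ∩ {z | ∀ i : Fin n, d ≤ (i : ℕ) → z i = 0} := by
        rw [← himg]
        exact ⟨y, ⟨hyX, hyU⟩, rfl⟩
      have hjw : j (pr (φ y)) = φ y := by
        funext i
        rw [hj]
        by_cases hi : (i : ℕ) < d
        · rw [dif_pos hi, hpr]
          congr 1
        · rw [dif_neg hi]
          exact (hφy.2 i (not_lt.mp hi)).symm
      have hyw : ψ (j (pr (φ y))) = y := by rw [hjw, hinv y hyU]
      refine ⟨pr (φ y), ⟨hprN0.1, hprN0.2, ?_⟩, hyw⟩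
      rw [Set.mem_preimage, hyw]
      exact hyB
    · rintro y ⟨w, hw, rfl⟩
      refine ⟨?_, hw.2.2⟩
      have hjwP : j w ∈ V ∩ {z | ∀ i : Fin n, d ≤ (i : ℕ) → z i = 0} := by
        refine ⟨hw.2.1, fun i hi => ?_⟩
        rw [hj, dif_neg (not_lt.mpr hi)]
      rw [← himg] at hjwP
      obtain ⟨u1, hu1, hu1e⟩ := hjwP
      show ψ (j w) ∈ X
      rw [← hu1e, hinv u1 hu1.2]
      exact hu1.1
  -- pointwise graph identity
  have hClaim2 : ∀ w ∈ N1, (ψ (j w)) ∘ σ =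
      (Fin.append (Φ w) (g (Φ w))) ∘ Fin.cast hnd := by
    intro w hw
    funext i
    simp only [Function.comp_apply]
    by_cases hi : (i : ℕ) < d
    · have hcast : Fin.cast hnd i = Fin.castAdd (n - d) ⟨(i : ℕ), hi⟩ := Fin.ext rfl
      rw [hcast, Fin.append_left]
      have hΦw : Φ w = F w := congrFun hΦcoe w
      rw [hΦw]
      have : F w ⟨(i : ℕ), hi⟩ = ψ (j w) (emb ⟨(i : ℕ), hi⟩) := rfl
      rw [this]
      congr 1
      have hi2 : Fin.castLE hd (⟨(i : ℕ), hi⟩ : Fin d) = i := Fin.ext rfl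
      rw [← hσ ⟨(i : ℕ), hi⟩, hi2]
    · have hd2 : d ≤ (i : ℕ) := not_lt.mp hi
      have hd3 : (i : ℕ) - d < n - d := by omega
      have hcast : Fin.cast hnd i = Fin.natAdd d ⟨(i : ℕ) - d, hd3⟩ := by
        apply Fin.ext
        simp
        omega
      rw [hcast, Fin.append_right]
      rw [hgdef]
      simp only
      rw [hWsymm w hw]
      congr 2
      apply Fin.ext
      simp
      omega
  -- assemble
  refine ⟨σ, B, ⟨fun i => x i - ε, fun i => x i + ε, fun i => by dsimp only; linarith, rfl⟩, hxB,
    Wset, g, hWopen, hgCD, ?_⟩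
  rw [hClaim1, hWdef, Set.image_image, Set.image_image]
  apply Set.image_congr
  intro w hw
  exact hClaim2 w hw
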